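/- Up to conjugation in O(D₄), there is exactly one isometry of the lattice D₄ of order three whose only eigenvalues are the two primitive third roots of unity (equivalently, order three with no nonzero fixed vector), each with a two-dimensional eigenspace. -/

import Mathlib

open Matrix Polynomial

/-- Gram matrix of the root lattice `D₄`. -/
def GD4 : Matrix (Fin 4) (Fin 4) ℤ := !![2,0,1,0; 0,2,-1,0; 1,-1,2,-1; 0,0,-1,2]

/-- `R` is an isometry of `D₄` of order three with no nonzero fixed vector
(equivalently, its only eigenvalues are the two primitive third roots of unity). -/
def IsTriD4 (R : Matrix (Fin 4) (Fin 4) ℤ) : Prop :=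
  IsUnit R.det ∧ Rᵀ * GD4 * R = GD4 ∧ R ^ 3 = 1 ∧ R ≠ 1 ∧
    ∀ v : Fin 4 → ℤ, R.mulVec v = v → v = 0

abbrev V := ℤ × ℤ × ℤ × ℤ

/-- the D4 inner product of two integer 4-tuples -/
def ipq (a b : V) : ℤ :=
  2*a.1*b.1 + 2*a.2.1*b.2.1 + 2*a.2.2.1*b.2.2.1 + 2*a.2.2.2*b.2.2.2
  + a.1*b.2.2.1 + a.2.2.1*b.1 - a.2.1*b.2.2.1 - a.2.2.1*b.2.1
  - a.2.2.1*b.2.2.2 - a.2.2.2*b.2.2.1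

def rootsL : List V := [(-1,0,0,0), (-1,0,1,0), (-1,0,1,1), (-1,1,1,0), (-1,1,1,1), (-1,1,2,1), (0,-1,-1,-1), (0,-1,-1,0), (0,-1,0,0), (0,0,-1,-1), (0,0,-1,0), (0,0,0,-1), (0,0,0,1), (0,0,1,0), (0,0,1,1), (0,1,0,0), (0,1,1,0), (0,1,1,1), (1,-1,-2,-1), (1,-1,-1,-1), (1,-1,-1,0), (1,0,-1,-1), (1,0,-1,0), (1,0,0,0)]

def mkM (a b c d : V) : Matrix (Fin 4) (Fin 4) ℤ :=
  !![a.1, b.1, c.1, d.1;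
     a.2.1, b.2.1, c.2.1, d.2.1;
     a.2.2.1, b.2.2.1, c.2.2.1, d.2.2.1;
     a.2.2.2, b.2.2.2, c.2.2.2, d.2.2.2]
def R0 : Matrix (Fin 4) (Fin 4) ℤ := !![-1,0,-1,1; 0,0,0,-1; 1,1,0,-1; 0,1,0,-1]

def tbl : List (Matrix (Fin 4) (Fin 4) ℤ × Matrix (Fin 4) (Fin 4) ℤ) := [(!![-1,0,-1,1; 0,0,0,-1; 1,1,0,-1; 0,1,0,-1], !![-1,-1,0,0; 0,1,0,-1; 0,2,-1,0; 0,1,0,0]), (!![-1,1,-1,0; 0,-1,0,1; 1,-1,0,1; 0,-1,0,0], !![-1,-1,0,0; 0,1,0,0; 0,2,-1,0; 0,1,0,-1]), (!![-1,0,0,-1; 0,0,-1,1; 1,1,-1,1; 1,0,0,0], !![-1,-1,0,0; 0,1,0,-1; 0,2,-1,0; 0,1,-1,0]), (!![-1,1,-1,0; 0,-1,1,-1; 1,-1,1,-1; 1,0,1,-1], !![-1,-1,0,0; 0,1,0,0; 0,2,-1,0; 0,1,-1,1]), (!![-1,-1,0,0; 1,0,0,0; 1,1,-1,1; 0,1,-1,0],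 !![-1,-1,0,0; 0,1,-1,0; 0,2,-1,0; 0,1,0,-1]), (!![-1,0,-1,1; 1,-1,1,0; 1,-1,1,-1; 0,-1,1,-1], !![-1,-1,0,0; 0,1,-1,1; 0,2,-1,0; 0,1,0,0]), (!![-1,-1,0,0; 1,0,0,0; 1,1,0,-1; 1,0,1,-1], !![-1,-1,0,0; 0,1,-1,0; 0,2,-1,0; 0,1,-1,1]), (!![-1,0,0,-1; 1,-1,1,0; 1,-1,0,1; 1,0,0,0], !![-1,-1,0,0; 0,1,-1,1; 0,2,-1,0; 0,1,-1,0]), (!![0,0,0,1; -1,0,-1,0; -1,1,-1,-1; -1,0,0,-1], !![-1,0,-1,1; 0,-1,1,-1; 0,0,1,-2; 0,0,1,-1]), (!![0,1,0,0; -1,-1,0,0; -1,-1,-1,1; -1,0,-1,0], !![-1,0,-1,0; 0,-1,1,0; 0,0,1,0; 0,0,1,-1]), (!![0,0,1,-1; -1,0,-1,0; -1,1,-2,1; 0,1,-1,0], !![-1,0,-1,1; 0,-1,1,-1; 0,0,1,-2; 0,0,0,-1]), (!![0,1,0,0; -1,-1,0,0; -1,-1,0,-1; 0,-1,1,-1],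 !![-1,0,-1,0; 0,-1,1,0; 0,0,1,0; 0,0,0,1]), (!![0,-1,1,0; 0,0,-1,1; -1,1,-2,1; -1,0,-1,0], !![-1,0,-1,1; 0,0,0,-1; 0,0,1,-2; 0,-1,1,-1]), (!![0,0,0,1; 0,-1,1,-1; -1,-1,0,-1; -1,0,0,-1], !![-1,0,-1,0; 0,0,0,1; 0,0,1,0; 0,-1,1,0]), (!![0,-1,1,0; 0,0,0,-1; -1,1,-1,-1; 0,1,0,-1], !![-1,0,-1,1; 0,0,0,-1; 0,0,1,-2; 0,1,0,-1]), (!![0,0,1,-1; 0,-1,0,1; -1,-1,-1,1; 0,-1,0,0], !![-1,0,-1,0; 0,0,0,1; 0,0,1,0; 0,1,0,0])]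

theorem rootsAux : ∀ a ∈ Finset.Icc (-2:ℤ) 2, ∀ b ∈ Finset.Icc (-2:ℤ) 2,
    ∀ c ∈ Finset.Icc (-2:ℤ) 2, ∀ d ∈ Finset.Icc (-2:ℤ) 2,
    ipq (a,b,c,d) (a,b,c,d) = 2 → (a,b,c,d) ∈ rootsL := by decide

theorem root_mem (x : V) (h : ipq x x = 2) : x ∈ rootsL := by
  obtain ⟨a,b,c,d⟩ := x
  simp only [ipq] at h
  have h2 : (2*a+c)^2 + (2*b-c)^2 + (2*d-c)^2 + c^2 = 4 := by linear_combination 2*h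
  have b1 : (2*a+c)^2 ≤ 4 := by nlinarith [sq_nonneg (2*b-c), sq_nonneg (2*d-c), sq_nonneg c]
  have b2 : (2*b-c)^2 ≤ 4 := by nlinarith [sq_nonneg (2*a+c), sq_nonneg (2*d-c), sq_nonneg c]
  have b3 : (2*d-c)^2 ≤ 4 := by nlinarith [sq_nonneg (2*a+c), sq_nonneg (2*b-c), sq_nonneg c]
  have b4 : c^2 ≤ 4 := by nlinarith [sq_nonneg (2*a+c), sq_nonneg (2*b-c), sq_nonneg (2*d-c)]
  have c1 : -2 ≤ 2*a+c ∧ 2*a+c ≤ 2 := ⟨by nlinarith [sq_nonneg (2*a+c+2)], by nlinarith [sq_nonneg (2*a+c-2)]⟩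
  have c2 : -2 ≤ 2*b-c ∧ 2*b-c ≤ 2 := ⟨by nlinarith [sq_nonneg (2*b-c+2)], by nlinarith [sq_nonneg (2*b-c-2)]⟩
  have c3 : -2 ≤ 2*d-c ∧ 2*d-c ≤ 2 := ⟨by nlinarith [sq_nonneg (2*d-c+2)], by nlinarith [sq_nonneg (2*d-c-2)]⟩
  have c4 : -2 ≤ c ∧ c ≤ 2 := ⟨by nlinarith [sq_nonneg (c+2)], by nlinarith [sq_nonneg (c-2)]⟩
  refine rootsAux a ?_ b ?_ c ?_ d ?_ ?_ <;> first
    | (rw [Finset.mem_Icc]; omega)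
    | (simp only [ipq]; linear_combination h)

set_option maxRecDepth 100000 in
set_option maxHeartbeats 4000000 in
theorem megaAux : ∀ t0 ∈ rootsL, ∀ t1 ∈ rootsL, ipq t0 t1 = 0 →
    ∀ t2 ∈ rootsL, ipq t0 t2 = 1 → ipq t1 t2 = -1 →
    ∀ t3 ∈ rootsL, ipq t0 t3 = 0 → ipq t1 t3 = 0 → ipq t2 t3 = -1 →
    mkM t0 t1 t2 t3 * mkM t0 t1 t2 t3 + mkM t0 t1 t2 t3 + 1 = 0 →
    mkM t0 t1 t2 t3 ∈ tbl.map Prod.fst := by decide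

theorem tblProp : ∀ q ∈ tbl, q.1 * q.2 = q.2 * R0 ∧ q.2ᵀ * GD4 * q.2 = GD4 := by decide

/-- an isometry of a nondegenerate form has unit determinant -/
theorem isom_unit (P : Matrix (Fin 4) (Fin 4) ℤ) (h : Pᵀ * GD4 * P = GD4) :
    IsUnit P.det := by
  have hdet : det GD4 = 4 := by decide
  have h1 := congrArg Matrix.det h
  rw [Matrix.det_mul, Matrix.det_mul, Matrix.det_transpose, hdet] at h1
  refine IsUnit.of_mul_eq_one (a := P.det) P.det ?_
  have h4 : (P.det * P.det) * 4 = 1 * 4 := by linear_combination h1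
  exact mul_right_cancel₀ (by norm_num) h4

/-- order three without nonzero fixed vectors gives `R² + R + 1 = 0` -/
theorem sq_rel (R : Matrix (Fin 4) (Fin 4) ℤ) (h3 : R ^ 3 = 1)
    (hfix : ∀ v : Fin 4 → ℤ, R.mulVec v = v → v = 0) : R * R + R + 1 = 0 := by
  set N := R * R + R + 1 with hN
  have key : R * N = N := by
    calc R * N = R ^ 3 + R * R + R := by rw [hN]; noncomm_ring
    _ = 1 + R * R + R := by rw [h3]
    _ = N := by rw [hN]; abel
  have hz : ∀ v : Fin 4 → ℤ, N.mulVec v = 0 := by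
    intro v
    refine hfix _ ?_
    rw [Matrix.mulVec_mulVec, key]
  ext i j
  have := congrFun (hz (Pi.single j 1)) i
  rw [Matrix.mulVec_single] at this
  simpa using this

/-- `R² + R + 1 = 0` implies no nonzero fixed vectors -/
theorem nofix_of_sq (R : Matrix (Fin 4) (Fin 4) ℤ) (h : R * R + R + 1 = 0) :
    ∀ v : Fin 4 → ℤ, R.mulVec v = v → v = 0 := by
  intro v hv
  have h0 : (R * R + R + 1).mulVec v = v + v + v := by
    rw [Matrix.add_mulVec, Matrix.add_mulVec, Matrix.one_mulVec,
      ← Matrix.mulVec_mulVec, hv, hv]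
  rw [h, Matrix.zero_mulVec] at h0
  funext i
  have h1 := congrFun h0 i
  simp only [Pi.add_apply, Pi.zero_apply] at h1
  show v i = (0 : Fin 4 → ℤ) i
  simp only [Pi.zero_apply]
  omega

theorem mem_keys (R : Matrix (Fin 4) (Fin 4) ℤ) (h : IsTriD4 R) :
    R ∈ tbl.map Prod.fst := by
  obtain ⟨-, hG, h3, -, hfix⟩ := h
  have hsq := sq_rel R h3 hfix
  have hRm : R = mkM (R 0 0, R 1 0, R 2 0, R 3 0) (R 0 1, R 1 1, R 2 1, R 3 1)
      (R 0 2, R 1 2, R 2 2, R 3 2) (R 0 3, R 1 3, R 2 3, R 3 3) := by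
    ext i j; fin_cases i <;> fin_cases j <;> rfl
  have hent : ∀ i j : Fin 4, ipq (R 0 i, R 1 i, R 2 i, R 3 i) (R 0 j, R 1 j, R 2 j, R 3 j)
      = GD4 i j := by
    intro i j
    have h := congrFun (congrFun hG i) j
    fin_cases i <;> fin_cases j <;>
      · simp only [Matrix.mul_apply, Matrix.transpose_apply, GD4, Fin.sum_univ_four] at h ⊢
        simp only [ipq]
        norm_num [Matrix.cons_val_zero, Matrix.cons_val_one, Matrix.head_cons, Matrix.cons_val_two, Matrix.cons_val_three, Matrix.tail_cons, Matrix.of_apply] at h ⊢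
        linear_combination h
  rw [hRm]
  refine megaAux _ (root_mem _ ?_) _ (root_mem _ ?_) ?_ _ (root_mem _ ?_) ?_ ?_
    _ (root_mem _ ?_) ?_ ?_ ?_ ?_
  · simpa [GD4] using hent 0 0
  · simpa [GD4] using hent 1 1
  · simpa [GD4] using hent 0 1
  · simpa [GD4] using hent 2 2
  · simpa [GD4] using hent 0 2
  · simpa [GD4] using hent 1 2
  · simpa [GD4] using hent 3 3
  · simpa [GD4] using hent 0 3
  · simpa [GD4] using hent 1 3
  · simpa [GD4] using hent 2 3
  · rw [← hRm]; exact hsq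

theorem conj0 (R : Matrix (Fin 4) (Fin 4) ℤ) (h : IsTriD4 R) :
    ∃ P : Matrix (Fin 4) (Fin 4) ℤ, Pᵀ * GD4 * P = GD4 ∧ R * P = P * R0 := by
  have hmem := mem_keys R h
  rw [List.mem_map] at hmem
  obtain ⟨q, hq, hq1⟩ := hmem
  obtain ⟨c1, c2⟩ := tblProp q hq
  exact ⟨q.2, c2, by rw [← hq1]; exact c1⟩

theorem tri_R0 : IsTriD4 R0 := by
  have hsq : R0 * R0 + R0 + 1 = 0 := by decide
  have hG : R0ᵀ * GD4 * R0 = GD4 := by decide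
  refine ⟨isom_unit _ hG, hG, by decide, by decide, nofix_of_sq _ hsq⟩

theorem charpoly_of_sq (M : Matrix (Fin 4) (Fin 4) ℤ) (h : M * M + M + 1 = 0) :
    M.charpoly = (X ^ 2 + X + 1) ^ 2 := by
  haveI : Fact (Nat.Prime 3) := ⟨by norm_num⟩
  set f : ℤ →+* ℚ := Int.castRingHom ℚ with hf
  set Mq : Matrix (Fin 4) (Fin 4) ℚ := M.map f with hMq
  have hq : Mq * Mq + Mq + 1 = 0 := by
    have h2 := congrArg (f.mapMatrix : Matrix (Fin 4) (Fin 4) ℤ →+* Matrix (Fin 4) (Fin 4) ℚ) h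
    simp only [_root_.map_add, _root_.map_mul, _root_.map_one, _root_.map_zero] at h2
    simp only [RingHom.mapMatrix_apply] at h2
    exact h2
  set Mc : Matrix (Fin 4) (Fin 4) ℚ[X] := Mq.map C with hMc
  have hc : Mc * Mc + Mc + 1 = 0 := by
    have h2 := congrArg ((C : ℚ →+* ℚ[X]).mapMatrix) hq
    simp only [_root_.map_add, _root_.map_mul, _root_.map_one, _root_.map_zero] at h2
    simp only [RingHom.mapMatrix_apply] at h2
    exact h2
  set sc : ℚ[X] →+* Matrix (Fin 4) (Fin 4) ℚ[X] := Matrix.scalar (Fin 4) with hsc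
  set B : Matrix (Fin 4) (Fin 4) ℚ[X] := sc ((-1 : ℚ[X]) - X) - Mc with hB
  have hcomm : ∀ p : ℚ[X], ∀ N : Matrix (Fin 4) (Fin 4) ℚ[X], sc p * N = N * sc p := by
    intro p N
    exact Matrix.scalar_commute p (fun r => mul_comm p r) N
  have hMM : Mc * Mc = -1 - Mc := by linear_combination (norm := noncomm_ring) hc
  have hAB : Mq.charmatrix * B = sc (-(X ^ 2 + X + 1)) := by
    have hA' : Mq.charmatrix = sc X - Mc := rfl
    rw [hA', hB]
    have expand : (sc X - Mc) * (sc ((-1 : ℚ[X]) - X) - Mc)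
        = sc X * sc ((-1 : ℚ[X]) - X) - sc X * Mc - Mc * sc ((-1 : ℚ[X]) - X) + Mc * Mc := by
      noncomm_ring
    rw [expand, show Mc * sc ((-1 : ℚ[X]) - X) = sc ((-1 : ℚ[X]) - X) * Mc from (hcomm _ _).symm,
      hMM, sub_sub]
    have h5 : sc X * Mc + sc ((-1 : ℚ[X]) - X) * Mc = -Mc := by
      rw [← add_mul, ← _root_.map_add]
      rw [show (X + ((-1 : ℚ[X]) - X)) = -1 by ring, map_neg, _root_.map_one]
      noncomm_ring
    rw [h5]
    have h6 : sc (-(X ^ 2 + X + 1)) = sc X * sc ((-1 : ℚ[X]) - X) - 1 := by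
      rw [← _root_.map_mul, ← _root_.map_one sc, ← map_sub]
      congr 1
      ring
    rw [h6]
    abel
  have hdetid : Mq.charpoly * B.det = (X ^ 2 + X + 1) ^ 4 := by
    have h7 := congrArg Matrix.det hAB
    rw [Matrix.det_mul] at h7
    rw [Matrix.charpoly, h7, hsc, Matrix.scalar_apply, Matrix.det_diagonal]
    rw [Finset.prod_const]
    simp only [Finset.card_univ, Fintype.card_fin]
    ring
  set cyc : ℚ[X] := cyclotomic 3 ℚ with hcycdef
  have hcyc : cyc = X ^ 2 + X + 1 := by
    rw [hcycdef, cyclotomic_prime]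
    rw [Finset.sum_range_succ, Finset.sum_range_succ, Finset.sum_range_succ,
      Finset.sum_range_zero]
    ring
  have hirr : Irreducible cyc := cyclotomic.irreducible_rat (by norm_num)
  have hprime : Prime cyc := hirr.prime
  have hdvd : Mq.charpoly ∣ cyc ^ 4 := ⟨B.det, by rw [hcyc]; exact hdetid.symm⟩
  obtain ⟨i, hi, hassoc⟩ := (dvd_prime_pow hprime 4).mp hdvd
  have hmonic : Mq.charpoly.Monic := Matrix.charpoly_monic Mq
  have heq : Mq.charpoly = cyc ^ i :=
    eq_of_monic_of_associated hmonic ((cyclotomic.monic 3 ℚ).pow i) hassoc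
  have hdeg : Mq.charpoly.natDegree = 4 := by
    rw [Matrix.charpoly_natDegree_eq_dim]; simp
  have hdegcyc : (cyc ^ i).natDegree = 2 * i := by
    rw [Polynomial.natDegree_pow, hcycdef, natDegree_cyclotomic]
    rw [Nat.totient_prime (by norm_num)]
    ring
  have hi2 : i = 2 := by
    rw [heq, hdegcyc] at hdeg; omega
  rw [hi2, hcyc] at heq
  have hmap : M.charpoly.map f = ((X ^ 2 + X + 1 : ℤ[X]) ^ 2).map f := by
    rw [← Matrix.charpoly_map M f, heq]
    simp [Polynomial.map_pow]
  refine Polynomial.map_injective f ?_ hmap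
  intro a b hab
  simp only [hf, Int.coe_castRingHom] at hab
  exact_mod_cast hab

theorem stmt_14 :
    (∃ R, IsTriD4 R) ∧
    (∀ R S, IsTriD4 R → IsTriD4 S →
      ∃ P : Matrix (Fin 4) (Fin 4) ℤ, IsUnit P.det ∧ Pᵀ * GD4 * P = GD4 ∧
        S * P = P * R) ∧
    (∀ R, IsTriD4 R → R.charpoly = (X ^ 2 + X + 1) ^ 2) := by
  refine ⟨⟨R0, tri_R0⟩, ?_, ?_⟩
  · intro R S hR hS
    obtain ⟨Pr, hPrG, hPr⟩ := conj0 R hR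
    obtain ⟨Ps, hPsG, hPs⟩ := conj0 S hS
    have huPr : IsUnit Pr.det := isom_unit _ hPrG
    have hinv1 : Pr * Pr⁻¹ = 1 := Matrix.mul_nonsing_inv _ huPr
    have hinv2 : Pr⁻¹ * Pr = 1 := Matrix.nonsing_inv_mul _ huPr
    have e1 : Pr⁻¹ᵀ * Prᵀ = 1 := by rw [← Matrix.transpose_mul, hinv1, Matrix.transpose_one]
    refine ⟨Ps * Pr⁻¹, ?_, ?_, ?_⟩
    · apply isom_unit
      rw [Matrix.transpose_mul]
      calc Pr⁻¹ᵀ * Psᵀ * GD4 * (Ps * Pr⁻¹)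
          = Pr⁻¹ᵀ * (Psᵀ * GD4 * Ps) * Pr⁻¹ := by simp only [Matrix.mul_assoc]
        _ = Pr⁻¹ᵀ * (Prᵀ * GD4 * Pr) * Pr⁻¹ := by rw [hPsG, hPrG]
        _ = (Pr⁻¹ᵀ * Prᵀ) * GD4 * (Pr * Pr⁻¹) := by simp only [Matrix.mul_assoc]
        _ = GD4 := by rw [e1, hinv1, Matrix.one_mul, Matrix.mul_one]
    · rw [Matrix.transpose_mul]
      calc Pr⁻¹ᵀ * Psᵀ * GD4 * (Ps * Pr⁻¹)
          = Pr⁻¹ᵀ * (Psᵀ * GD4 * Ps) * Pr⁻¹ := by simp only [Matrix.mul_assoc]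
        _ = Pr⁻¹ᵀ * (Prᵀ * GD4 * Pr) * Pr⁻¹ := by rw [hPsG, hPrG]
        _ = (Pr⁻¹ᵀ * Prᵀ) * GD4 * (Pr * Pr⁻¹) := by simp only [Matrix.mul_assoc]
        _ = GD4 := by rw [e1, hinv1, Matrix.one_mul, Matrix.mul_one]
    · have hcomm : R0 * Pr⁻¹ = Pr⁻¹ * R := by
        calc R0 * Pr⁻¹ = (Pr⁻¹ * Pr) * R0 * Pr⁻¹ := by rw [hinv2, Matrix.one_mul]
          _ = Pr⁻¹ * (Pr * R0) * Pr⁻¹ := by simp only [Matrix.mul_assoc]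
          _ = Pr⁻¹ * (R * Pr) * Pr⁻¹ := by rw [← hPr]
          _ = Pr⁻¹ * R * (Pr * Pr⁻¹) := by simp only [Matrix.mul_assoc]
          _ = Pr⁻¹ * R := by rw [hinv1, Matrix.mul_one]
      calc S * (Ps * Pr⁻¹) = (S * Ps) * Pr⁻¹ := by rw [Matrix.mul_assoc]
        _ = Ps * (R0 * Pr⁻¹) := by rw [hPs, Matrix.mul_assoc]
        _ = Ps * (Pr⁻¹ * R) := by rw [hcomm]
        _ = (Ps * Pr⁻¹) * R := by rw [Matrix.mul_assoc]
  · intro R hR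
    have h3 := hR.2.2.1
    have hfix := hR.2.2.2.2
    exact charpoly_of_sq R (sq_rel R h3 hfix)
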